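/- arXiv:2109.00650 — 2 statements merged into one kernel-verified Lean document; each statement's English description precedes it below -/
import Mathlib

section
/- Deterministic core of Theorem 1 (convergence of Dash). Assume η·L ≤ 1 and 0 < η·μ ≤ 1, and set γ = 1/(1 − η·μ/2) (so γ > 1). Let G, a₀, b₁, δ, m > 0 and let ρ̂ ≥ (4G²/μ)·(1/(δ·a₀·m) + b₁). Let w₁, …, w_{T+1} ∈ E be generated by w_{t+1} = w_t − η·((1 − b_t)·g_tᵃ + b_t·g_tᵇ) for t = 1, …, T, where for every t: b_t ∈ [0, 1] with b_t ≤ b₁·γ^{−(t−1)}, the vectors g_tᵃ, g_tᵇ ∈ E satisfy ‖g_tᵃ − ∇F(w_t)‖² ≤ 4G²/(δ·a₀·m·γ^{t−1}) and ‖g_tᵇ‖ ≤ G, and ‖∇F(w_t)‖ ≤ G. If F(w₁) ≤ ρ̂, then F(w_{T+1}) ≤ ρ̂·γ^{−T}. -/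
open Gradient
open scoped RealInnerProductSpace

/-- Convexity of the squared norm on a segment. -/
lemma sq_norm_combo_le {E : Type*} [NormedAddCommGroup E] [InnerProductSpace ℝ E]
    (u v : E) {b : ℝ} (hb0 : 0 ≤ b) (hb1 : b ≤ 1) :
    ‖(1 - b) • u + b • v‖ ^ 2 ≤ (1 - b) * ‖u‖ ^ 2 + b * ‖v‖ ^ 2 := by
  have h : ‖(1 - b) • u + b • v‖ ≤ (1 - b) * ‖u‖ + b * ‖v‖ := by
    calc ‖(1 - b) • u + b • v‖ ≤ ‖(1 - b) • u‖ + ‖b • v‖ := norm_add_le _ _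
    _ = (1 - b) * ‖u‖ + b * ‖v‖ := by
        rw [norm_smul, norm_smul, Real.norm_eq_abs, Real.norm_eq_abs,
          abs_of_nonneg (by linarith), abs_of_nonneg hb0]
  have h2 : ‖(1 - b) • u + b • v‖ ^ 2 ≤ ((1 - b) * ‖u‖ + b * ‖v‖) ^ 2 :=
    pow_le_pow_left₀ (norm_nonneg _) h 2
  nlinarith [mul_nonneg (mul_nonneg hb0 (by linarith : (0:ℝ) ≤ 1 - b))
    (sq_nonneg (‖u‖ - ‖v‖))]

/-- The descent lemma for functions with Lipschitz gradient. -/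
lemma descent_lemma {E : Type*} [NormedAddCommGroup E] [InnerProductSpace ℝ E]
    [CompleteSpace E] (F : E → ℝ) (L : ℝ) (hL : 0 ≤ L)
    (hdiff : Differentiable ℝ F)
    (hlip : ∀ a c : E, ‖gradient F a - gradient F c‖ ≤ L * ‖a - c‖)
    (x v : E) :
    F (x + v) ≤ F x + ⟪gradient F x, v⟫ + L / 2 * ‖v‖ ^ 2 := by
  have hd : ∀ t : ℝ, HasDerivAt (fun s : ℝ => F (x + s • v))
      ⟪gradient F (x + t • v), v⟫ t := by
    intro t
    have h1 : HasDerivAt (fun s : ℝ => x + s • v) v t := by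
      simpa using ((hasDerivAt_id t).smul_const v).const_add x
    have h2 := (hdiff (x + t • v)).hasGradientAt.hasFDerivAt
    have h3 := h2.comp_hasDerivAt t h1
    simpa [InnerProductSpace.toDual_apply_apply, Function.comp_def] using h3
  set φ : ℝ → ℝ := fun t => F (x + t • v) - t * ⟪gradient F x, v⟫
    - L / 2 * ‖v‖ ^ 2 * t ^ 2 with hφdef
  have hφ : ∀ t : ℝ, HasDerivAt φ
      (⟪gradient F (x + t • v), v⟫ - ⟪gradient F x, v⟫ - L * ‖v‖ ^ 2 * t) t := by
    intro t
    have h1 := (hd t).sub (hasDerivAt_mul_const ⟪gradient F x, v⟫)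
    have h2 := ((hasDerivAt_pow 2 t).const_mul (L / 2 * ‖v‖ ^ 2))
    have h3 := h1.sub h2
    refine h3.congr_deriv ?_
    push_cast
    ring
  have hderiv_nonpos : ∀ t ∈ Set.Ioo (0:ℝ) 1, deriv φ t ≤ 0 := by
    intro t ht
    rw [(hφ t).deriv]
    have hip : ⟪gradient F (x + t • v) - gradient F x, v⟫
        ≤ ‖gradient F (x + t • v) - gradient F x‖ * ‖v‖ := real_inner_le_norm _ _
    have hlt := hlip (x + t • v) x
    have hn : ‖x + t • v - x‖ = t * ‖v‖ := by
      rw [add_sub_cancel_left, norm_smul, Real.norm_eq_abs, abs_of_nonneg ht.1.le]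
    rw [hn] at hlt
    rw [inner_sub_left] at hip
    nlinarith [norm_nonneg v, mul_le_mul_of_nonneg_right hlt (norm_nonneg v)]
  have hcont : Continuous φ := by
    have : Differentiable ℝ φ := fun t => (hφ t).differentiableAt
    exact this.continuous
  have hanti : AntitoneOn φ (Set.Icc (0:ℝ) 1) := by
    apply antitoneOn_of_deriv_nonpos (convex_Icc 0 1) hcont.continuousOn
    · intro t _
      exact (hφ t).differentiableAt.differentiableWithinAt
    · intro t ht
      rw [interior_Icc] at ht
      exact hderiv_nonpos t ht
  have h01 := hanti (Set.left_mem_Icc.2 zero_le_one) (Set.right_mem_Icc.2 zero_le_one)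
    zero_le_one
  simp only [hφdef, zero_smul, add_zero, one_smul, zero_mul, zero_pow, mul_zero,
    sub_zero, one_pow, mul_one, one_mul] at h01
  linarith

set_option maxHeartbeats 4000000 in
/-- Deterministic core of Theorem 1 (convergence of Dash). -/
theorem dash_convergence
    {E : Type*} [NormedAddCommGroup E] [InnerProductSpace ℝ E] [CompleteSpace E]
    (F : E → ℝ) (L μ : ℝ) (hL : 0 < L) (hμ : 0 < μ)
    (hdiff : Differentiable ℝ F)
    (hlip : ∀ w u : E, ‖gradient F w - gradient F u‖ ≤ L * ‖w - u‖)
    (hFnonneg : ∀ w : E, 0 ≤ F w)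
    (hPL : ∀ w : E, 2 * μ * F w ≤ ‖gradient F w‖ ^ 2)
    (η γ G a₀ b₁ δ m ρhat : ℝ)
    (hηL : η * L ≤ 1) (hημ0 : 0 < η * μ) (hημ1 : η * μ ≤ 1)
    (hγ : γ = 1 / (1 - η * μ / 2))
    (hG : 0 < G) (ha₀ : 0 < a₀) (hb₁ : 0 < b₁) (hδ : 0 < δ) (hm : 0 < m)
    (hρhat : 4 * G ^ 2 / μ * (1 / (δ * a₀ * m) + b₁) ≤ ρhat)
    (T : ℕ) (w ga gb : ℕ → E) (b : ℕ → ℝ)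
    (hupd : ∀ t, 1 ≤ t → t ≤ T →
      w (t + 1) = w t - η • ((1 - b t) • ga t + b t • gb t))
    (hb01 : ∀ t, 1 ≤ t → t ≤ T → b t ∈ Set.Icc (0 : ℝ) 1)
    (hble : ∀ t, 1 ≤ t → t ≤ T → b t ≤ b₁ * (γ ^ (t - 1))⁻¹)
    (hga : ∀ t, 1 ≤ t → t ≤ T →
      ‖ga t - gradient F (w t)‖ ^ 2 ≤ 4 * G ^ 2 / (δ * a₀ * m * γ ^ (t - 1)))
    (hgb : ∀ t, 1 ≤ t → t ≤ T → ‖gb t‖ ≤ G)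
    (hgrad : ∀ t, 1 ≤ t → t ≤ T → ‖gradient F (w t)‖ ≤ G)
    (hinit : F (w 1) ≤ ρhat) :
    F (w (T + 1)) ≤ ρhat * (γ ^ T)⁻¹ := by
  have hη : 0 < η := by nlinarith
  have hc : (0:ℝ) < 1 - η * μ / 2 := by linarith
  have hγpos : 0 < γ := by rw [hγ]; positivity
  have hγinv : γ⁻¹ = 1 - η * μ / 2 := by rw [hγ, one_div, inv_inv]
  have hρ0 : 0 ≤ ρhat := le_trans (by positivity) hρhat
  -- one-step inequality
  have key : ∀ t, 1 ≤ t → t ≤ T → F (w (t + 1)) ≤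
      (1 - η * μ) * F (w t) + η / 2 * ‖ga t - gradient F (w t)‖ ^ 2
        + 2 * η * G ^ 2 * b t := by
    intro t ht1 htT
    set g := gradient F (w t) with hg
    set d := (1 - b t) • ga t + b t • gb t with hd
    obtain ⟨hb0, hb1⟩ := hb01 t ht1 htT
    have hdesc := descent_lemma F L hL.le hdiff hlip (w t) (-(η • d))
    have hw : w (t + 1) = w t + -(η • d) := by
      rw [hupd t ht1 htT, sub_eq_add_neg]
    rw [← hw] at hdesc
    have hip : ⟪g, -(η • d)⟫ = -(η * ⟪g, d⟫) := by
      rw [inner_neg_right, real_inner_smul_right]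
    have hnm : ‖-(η • d)‖ ^ 2 = η ^ 2 * ‖d‖ ^ 2 := by
      rw [norm_neg, norm_smul, mul_pow, Real.norm_eq_abs, sq_abs]
    rw [hip, hnm] at hdesc
    have hLη : L * η ^ 2 ≤ η := by nlinarith
    have hquad : L / 2 * (η ^ 2 * ‖d‖ ^ 2) ≤ η / 2 * ‖d‖ ^ 2 := by
      nlinarith [sq_nonneg ‖d‖, mul_le_mul_of_nonneg_right hLη (sq_nonneg ‖d‖)]
    have hexp : η / 2 * ‖d - g‖ ^ 2
        = η / 2 * ‖d‖ ^ 2 - η * ⟪g, d⟫ + η / 2 * ‖g‖ ^ 2 := by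
      rw [norm_sub_sq_real, real_inner_comm d g]; ring
    have hcombo : d - g = (1 - b t) • (ga t - g) + b t • (gb t - g) := by
      rw [hd]; module
    have hconv : ‖d - g‖ ^ 2 ≤ (1 - b t) * ‖ga t - g‖ ^ 2 + b t * ‖gb t - g‖ ^ 2 := by
      rw [hcombo]; exact sq_norm_combo_le _ _ hb0 hb1
    have hgbg : ‖gb t - g‖ ≤ 2 * G := by
      calc ‖gb t - g‖ ≤ ‖gb t‖ + ‖g‖ := norm_sub_le _ _
      _ ≤ 2 * G := by have := hgb t ht1 htT; have := hgrad t ht1 htT; linarith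
    have hgbg2 : ‖gb t - g‖ ^ 2 ≤ 4 * G ^ 2 := by
      have h2 := pow_le_pow_left₀ (norm_nonneg (gb t - g)) hgbg 2
      nlinarith
    have hub : (1 - b t) * ‖ga t - g‖ ^ 2 + b t * ‖gb t - g‖ ^ 2
        ≤ ‖ga t - g‖ ^ 2 + 4 * G ^ 2 * b t := by
      nlinarith [mul_nonneg hb0 (sq_nonneg ‖ga t - g‖),
        mul_le_mul_of_nonneg_left hgbg2 hb0]
    have hub' : η / 2 * ‖d - g‖ ^ 2 ≤ η / 2 * (‖ga t - g‖ ^ 2 + 4 * G ^ 2 * b t) :=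
      mul_le_mul_of_nonneg_left (le_trans hconv hub) (by positivity)
    have hPLt := hPL (w t)
    have e6 : η * μ * F (w t) ≤ η / 2 * ‖g‖ ^ 2 := by
      have := mul_le_mul_of_nonneg_left hPLt (by positivity : (0:ℝ) ≤ η / 2)
      rw [← hg] at this; linarith only [this]
    linarith only [hdesc, hquad, hexp, hub', e6]
  -- induction
  have claim : ∀ s : ℕ, s ≤ T → F (w (s + 1)) ≤ ρhat * (γ ^ s)⁻¹ := by
    intro s
    induction s with
    | zero => intro _; simpa using hinit
    | succ s ih =>
      intro hsT
      have hs1 : 1 ≤ s + 1 := Nat.le_add_left 1 s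
      have hIH := ih (Nat.le_of_succ_le hsT)
      have hkey := key (s + 1) hs1 hsT
      have hts : (s + 1) - 1 = s := rfl
      have hPpos : (0:ℝ) < (γ ^ s)⁻¹ := by positivity
      have hA : ‖ga (s + 1) - gradient F (w (s + 1))‖ ^ 2
          ≤ 4 * G ^ 2 / (δ * a₀ * m) * (γ ^ s)⁻¹ := by
        have := hga (s + 1) hs1 hsT
        rw [hts] at this
        rw [div_mul_eq_div_div, div_eq_mul_inv] at this
        exact this
      have hbs : b (s + 1) ≤ b₁ * (γ ^ s)⁻¹ := by
        have := hble (s + 1) hs1 hsT; rwa [hts] at this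
      obtain ⟨hbs0, _⟩ := hb01 (s + 1) hs1 hsT
      have hsum : η / 2 * (4 * G ^ 2 / (δ * a₀ * m)) + 2 * η * G ^ 2 * b₁
          ≤ η * μ / 2 * ρhat := by
        have h := mul_le_mul_of_nonneg_left hρhat
          (by positivity : (0:ℝ) ≤ η * μ / 2)
        have heq : η * μ / 2 * (4 * G ^ 2 / μ * (1 / (δ * a₀ * m) + b₁))
            = η / 2 * (4 * G ^ 2 / (δ * a₀ * m)) + 2 * η * G ^ 2 * b₁ := by
          field_simp
          ring
        linarith [heq ▸ h]
      have h1 : (1 - η * μ) * F (w (s + 1)) ≤ (1 - η * μ) * (ρhat * (γ ^ s)⁻¹) :=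
        mul_le_mul_of_nonneg_left hIH (by linarith)
      have h2 : η / 2 * ‖ga (s + 1) - gradient F (w (s + 1))‖ ^ 2
          ≤ η / 2 * (4 * G ^ 2 / (δ * a₀ * m) * (γ ^ s)⁻¹) :=
        mul_le_mul_of_nonneg_left hA (by positivity)
      have h3 : 2 * η * G ^ 2 * b (s + 1) ≤ 2 * η * G ^ 2 * (b₁ * (γ ^ s)⁻¹) :=
        mul_le_mul_of_nonneg_left hbs (by positivity)
      have h4 : (η / 2 * (4 * G ^ 2 / (δ * a₀ * m)) + 2 * η * G ^ 2 * b₁) * (γ ^ s)⁻¹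
          ≤ (η * μ / 2 * ρhat) * (γ ^ s)⁻¹ :=
        mul_le_mul_of_nonneg_right hsum hPpos.le
      have hgoal : (γ ^ (s + 1))⁻¹ = (γ ^ s)⁻¹ * (1 - η * μ / 2) := by
        rw [pow_succ, mul_inv, hγinv]
      rw [hgoal]
      linarith only [hkey, h1, h2, h3, h4]
  exact claim T le_rfl
end

section
/- One-step contraction under the Polyak–Łojasiewicz condition. For every w, g ∈ E and every η > 0 with η·L ≤ 1, F(w − η·g) ≤ (1 − η·μ)·F(w) + (η/2)·‖∇F(w) − g‖². -/
open InnerProductSpace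

/-- One-step contraction under the Polyak–Łojasiewicz condition. -/
theorem one_step_PL_contraction
    {E : Type*} [NormedAddCommGroup E] [InnerProductSpace ℝ E] [CompleteSpace E]
    (F : E → ℝ) (L μ : ℝ) (hL : 0 < L) (hμ : 0 < μ)
    (hdiff : Differentiable ℝ F)
    (hlip : ∀ w u : E, ‖gradient F w - gradient F u‖ ≤ L * ‖w - u‖)
    (hFnonneg : ∀ w : E, 0 ≤ F w)
    (hPL : ∀ w : E, 2 * μ * F w ≤ ‖gradient F w‖ ^ 2)
    (w g : E) (η : ℝ) (hη : 0 < η) (hηL : η * L ≤ 1) :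
    F (w - η • g) ≤ (1 - η * μ) * F w + η / 2 * ‖gradient F w - g‖ ^ 2 := by
  -- descent lemma
  have descent : ∀ x v : E, F (x + v) ≤ F x + ⟪gradient F x, v⟫_ℝ + L / 2 * ‖v‖ ^ 2 := by
    intro x v
    set φ : ℝ → ℝ := fun t => F (x + t • v) - t * ⟪gradient F x, v⟫_ℝ - L * t ^ 2 / 2 * ‖v‖ ^ 2
      with hφ
    have hderiv : ∀ t : ℝ, HasDerivAt φ
        (⟪gradient F (x + t • v), v⟫_ℝ - ⟪gradient F x, v⟫_ℝ - L * t * ‖v‖ ^ 2) t := by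
      intro t
      have hline : HasDerivAt (fun t : ℝ => x + t • v) v t := by
        simpa using ((hasDerivAt_id t).smul_const v).const_add x
      have hF : HasDerivAt (fun t : ℝ => F (x + t • v))
          (⟪gradient F (x + t • v), v⟫_ℝ) t := by
        have := ((hdiff (x + t • v)).hasGradientAt.hasFDerivAt).comp_hasDerivAt t hline
        refine HasDerivAt.congr_deriv this ?_
        simp [InnerProductSpace.toDual]
      have h2 : HasDerivAt (fun t : ℝ => t * ⟪gradient F x, v⟫_ℝ)
          (⟪gradient F x, v⟫_ℝ) t := by
        simpa using (hasDerivAt_id t).mul_const (⟪gradient F x, v⟫_ℝ)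
      have h3 : HasDerivAt (fun t : ℝ => L * t ^ 2 / 2 * ‖v‖ ^ 2)
          (L * t * ‖v‖ ^ 2) t := by
        have := (hasDerivAt_pow 2 t).const_mul L
        have := (this.div_const 2).mul_const (‖v‖ ^ 2)
        refine this.congr_deriv ?_
        simp only [Nat.cast_ofNat, Nat.add_one_sub_one, pow_one]
        ring
      simp only [hφ]
      exact (hF.sub h2).sub h3
    have hmono : AntitoneOn φ (Set.Icc 0 1) := by
      apply antitoneOn_of_deriv_nonpos (convex_Icc 0 1)
      · exact Continuous.continuousOn (continuous_iff_continuousAt.2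
          fun t => (hderiv t).continuousAt)
      · intro t ht
        exact (hderiv t).differentiableAt.differentiableWithinAt
      · intro t ht
        rw [(hderiv t).deriv]
        rw [interior_Icc] at ht
        have h1 : ⟪gradient F (x + t • v) - gradient F x, v⟫_ℝ
            ≤ ‖gradient F (x + t • v) - gradient F x‖ * ‖v‖ := real_inner_le_norm _ _
        have h2 : ‖gradient F (x + t • v) - gradient F x‖ ≤ L * (t * ‖v‖) := by
          have := hlip (x + t • v) x
          simpa [norm_smul, abs_of_pos ht.1, mul_assoc] using this
        have h3 : ‖gradient F (x + t • v) - gradient F x‖ * ‖v‖ ≤ L * t * ‖v‖ ^ 2 := by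
          nlinarith [norm_nonneg v, norm_nonneg (gradient F (x + t • v) - gradient F x)]
        have h4 := inner_sub_left (𝕜 := ℝ) (gradient F (x + t • v)) (gradient F x) v
        linarith [h1.trans h3, h4.ge, h4.le]
    have := hmono (Set.left_mem_Icc.2 zero_le_one) (Set.right_mem_Icc.2 zero_le_one) zero_le_one
    simp only [hφ, one_smul, zero_smul, add_zero, one_pow, mul_one, zero_mul, mul_zero,
      zero_pow, sub_zero] at this
    linarith [this]
  have key := descent w (-(η • g))
  have hexp : ‖gradient F w - g‖ ^ 2
      = ‖gradient F w‖ ^ 2 - 2 * ⟪gradient F w, g⟫_ℝ + ‖g‖ ^ 2 := by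
    exact norm_sub_sq_real _ _
  have hinner : ⟪gradient F w, -(η • g)⟫_ℝ = -η * ⟪gradient F w, g⟫_ℝ := by
    rw [inner_neg_right, real_inner_smul_right]; ring
  have hnorm : ‖-(η • g)‖ ^ 2 = η ^ 2 * ‖g‖ ^ 2 := by
    rw [norm_neg, norm_smul, mul_pow, Real.norm_eq_abs, sq_abs]
  have hPLw := hPL w
  have hFw := hFnonneg w
  have hsub : w - η • g = w + -(η • g) := by abel
  rw [hsub]
  rw [hinner, hnorm] at key
  nlinarith [sq_nonneg (‖g‖), sq_nonneg η, mul_pos hη hL, sq_nonneg (η * ‖g‖)]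
end
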